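/- Let φ(x,y) = (y, x + f(y)), where f ∈ K[z] is monic of degree d ≥ 2 and K is a field with a non-archimedean absolute value |·|, extended to the algebraic closure. Set ρ(f) = max over pairs of roots ζ₁, ζ₂ of f of max(|ζ₁ − ζ₂|, 1), and let Δ_f = {(ζ₁, ζ₂) : f(ζ₁) = f(ζ₂) = 0}. If Q' ∈ Δ_f and P = (x,y) satisfies ‖P − Q'‖ > ρ(f), then P is not in the filled Julia set; more precisely, either ‖φ^N(P) − Q'‖ = ‖P − Q'‖^{d^N} for all N ≥ 1 (so ‖φ^N(P)‖ → ∞), or ‖φ^{−N}(P) − Q'‖ = ‖P − Q'‖^{d^N} for all N ≥ 1. -/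

import Mathlib

open Polynomial

/-- In a nonarchimedean field, adding an element of strictly smaller absolute
value does not change the absolute value. -/
private lemma na_add_eq {K : Type*} [Field K] (v : AbsoluteValue K ℝ)
    (hna : IsNonarchimedean v) {a b : K} (h : v b < v a) : v (a + b) = v a := by
  refine le_antisymm ((hna a b).trans_eq (max_eq_left h.le)) ?_
  by_contra hlt
  push_neg at hlt
  have h2 : v a ≤ max (v (a + b)) (v (-b)) := by
    have := hna (a + b) (-b)
    simpa using this
  rw [v.map_neg] at h2
  rcases max_cases (v (a + b)) (v b) with ⟨he, _⟩ | ⟨he, _⟩ <;> rw [he] at h2 <;> linarith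

/-- if `P` lies outside the polydisk of radius `ρ(f)` around a point
`Q' = (ζ',ζ)` of `Δ_f`, then either the forward or the backward iterates of `P`
under the Hénon map `φ(x,y) = (y, x+f(y))` escape, with
`‖φ^{±N}(P) − Q'‖ = ‖P − Q'‖^{d^N}`. -/
theorem stmt8 {K : Type*} [Field K] (v : AbsoluteValue K ℝ)
    (hna : IsNonarchimedean v) (d : ℕ) (hd : 2 ≤ d)
    (f : K[X]) (hmonic : f.Monic) (hdeg : f.natDegree = d)
    (hsplit : f.Splits)
    (ρ : ℝ) (hρ1 : 1 ≤ ρ)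
    (hρ2 : ∀ ζ₁ ζ₂ : K, f.eval ζ₁ = 0 → f.eval ζ₂ = 0 → v (ζ₁ - ζ₂) ≤ ρ)
    (hρ3 : ρ = 1 ∨ ∃ ζ₁ ζ₂ : K, f.eval ζ₁ = 0 ∧ f.eval ζ₂ = 0 ∧ v (ζ₁ - ζ₂) = ρ)
    (φ φi : K × K → K × K)
    (hφ : ∀ P, φ P = (P.2, P.1 + f.eval P.2))
    (hφi : ∀ P, φi P = (P.2 - f.eval P.1, P.1))
    (ζ' ζ : K) (hz1 : f.eval ζ' = 0) (hz2 : f.eval ζ = 0)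
    (P : K × K) (hfar : max (v (P.1 - ζ')) (v (P.2 - ζ)) > ρ) :
    (∀ N : ℕ, 1 ≤ N →
      max (v ((φ^[N] P).1 - ζ')) (v ((φ^[N] P).2 - ζ)) =
        (max (v (P.1 - ζ')) (v (P.2 - ζ))) ^ (d ^ N)) ∨
    (∀ N : ℕ, 1 ≤ N →
      max (v ((φi^[N] P).1 - ζ')) (v ((φi^[N] P).2 - ζ)) =
        (max (v (P.1 - ζ')) (v (P.2 - ζ))) ^ (d ^ N)) := by
  set r := max (v (P.1 - ζ')) (v (P.2 - ζ)) with hr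
  have hr1 : 1 < r := lt_of_le_of_lt hρ1 hfar
  have hρr : ρ < r := hfar
  have hζζ : v (ζ' - ζ) ≤ ρ := hρ2 _ _ hz1 hz2
  have hζζ' : v (ζ - ζ') ≤ ρ := hρ2 _ _ hz2 hz1
  have hf0 : f ≠ 0 := hmonic.ne_zero
  have hdn0 : ∀ N : ℕ, d ^ N ≠ 0 := fun N => pow_ne_zero N (by omega)
  have hrpow : ∀ N : ℕ, r ≤ r ^ d ^ N := fun N => le_self_pow₀ hr1.le (hdn0 N)
  have hrlt : ∀ N : ℕ, r ^ d ^ N < r ^ d ^ (N + 1) := fun N =>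
    pow_lt_pow_right₀ hr1 (Nat.pow_lt_pow_succ (by omega))
  have hcard : Multiset.card f.roots = d := by
    rw [Polynomial.splits_iff_card_roots.mp hsplit, hdeg]
  have key : ∀ ζ₀ w : K, f.eval ζ₀ = 0 → ρ < v (w - ζ₀) →
      v (f.eval w) = v (w - ζ₀) ^ d := by
    intro ζ₀ w h0 hw
    have hev : f.eval w = (f.roots.map (fun a => w - a)).prod := by
      conv_lhs => rw [hsplit.eq_prod_roots_of_monic hmonic]
      rw [Polynomial.eval_multiset_prod, Multiset.map_map]
      simp [Function.comp]
    rw [hev, map_multiset_prod, Multiset.map_map]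
    have hall : ∀ x ∈ f.roots.map (⇑v ∘ fun a => w - a), x = v (w - ζ₀) := by
      intro x hx
      obtain ⟨a, ha, rfl⟩ := Multiset.mem_map.mp hx
      have haroot : f.eval a = 0 := (Polynomial.mem_roots hf0).mp ha
      have h1 : v (ζ₀ - a) ≤ ρ := hρ2 _ _ h0 haroot
      have hsplit2 : w - a = (w - ζ₀) + (ζ₀ - a) := by ring
      simp only [Function.comp_apply]
      rw [hsplit2, na_add_eq v hna (lt_of_le_of_lt h1 hw)]
    rw [Multiset.eq_replicate_card.mpr hall, Multiset.prod_replicate,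
      Multiset.card_map, hcard]
  by_cases hc : v (P.1 - ζ') ≤ v (P.2 - ζ)
  · -- forward iterates escape
    left
    have hbase2 : v (P.2 - ζ) = r := (max_eq_right hc).symm
    have claim : ∀ N : ℕ, v ((φ^[N] P).2 - ζ) = r ^ d ^ N ∧
        v ((φ^[N] P).1 - ζ') ≤ r ^ d ^ N := by
      intro N
      induction N with
      | zero =>
        simp only [Function.iterate_zero, id_eq, pow_zero, pow_one]
        exact ⟨hbase2, le_max_left _ _⟩
      | succ N ih =>
        obtain ⟨h2, h1⟩ := ih
        set Q := φ^[N] P with hQ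
        have hiter : φ^[N + 1] P = φ Q := Function.iterate_succ_apply' φ N P
        rw [hiter, hφ Q]
        have hgt : ρ < v (Q.2 - ζ) := by rw [h2]; exact lt_of_lt_of_le hρr (hrpow N)
        have hfe : v (f.eval Q.2) = r ^ d ^ (N + 1) := by
          rw [key ζ Q.2 hz2 hgt, h2, ← pow_mul, ← pow_succ]
        have hmid : v (Q.1 - ζ) ≤ r ^ d ^ N := by
          have he : Q.1 - ζ = (Q.1 - ζ') + (ζ' - ζ) := by ring
          rw [he]
          exact le_trans (hna _ _)
            (max_le h1 (le_trans hζζ (le_trans hρr.le (hrpow N))))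
        constructor
        · have he : Q.1 + f.eval Q.2 - ζ = f.eval Q.2 + (Q.1 - ζ) := by ring
          show v (Q.1 + f.eval Q.2 - ζ) = _
          rw [he, na_add_eq v hna (by rw [hfe]; exact lt_of_le_of_lt hmid (hrlt N)), hfe]
        · show v (Q.2 - ζ') ≤ _
          have he : Q.2 - ζ' = (Q.2 - ζ) + (ζ - ζ') := by ring
          rw [he]
          refine le_trans (hna _ _) (max_le ?_ ?_)
          · rw [h2]; exact (hrlt N).le
          · exact le_trans hζζ' (le_trans hρr.le (le_trans (hrpow (N + 1)) le_rfl))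
    intro N _
    rw [max_eq_right ((claim N).2.trans (claim N).1.ge), (claim N).1]
  · -- backward iterates escape
    right
    push_neg at hc
    have hbase1 : v (P.1 - ζ') = r := (max_eq_left hc.le).symm
    have claim : ∀ N : ℕ, v ((φi^[N] P).1 - ζ') = r ^ d ^ N ∧
        v ((φi^[N] P).2 - ζ) ≤ r ^ d ^ N := by
      intro N
      induction N with
      | zero =>
        simp only [Function.iterate_zero, id_eq, pow_zero, pow_one]
        exact ⟨hbase1, le_max_right _ _⟩
      | succ N ih =>
        obtain ⟨h1, h2⟩ := ih
        set Q := φi^[N] P with hQ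
        have hiter : φi^[N + 1] P = φi Q := Function.iterate_succ_apply' φi N P
        rw [hiter, hφi Q]
        have hgt : ρ < v (Q.1 - ζ') := by rw [h1]; exact lt_of_lt_of_le hρr (hrpow N)
        have hfe : v (f.eval Q.1) = r ^ d ^ (N + 1) := by
          rw [key ζ' Q.1 hz1 hgt, h1, ← pow_mul, ← pow_succ]
        have hmid : v (Q.2 - ζ') ≤ r ^ d ^ N := by
          have he : Q.2 - ζ' = (Q.2 - ζ) + (ζ - ζ') := by ring
          rw [he]
          exact le_trans (hna _ _)
            (max_le h2 (le_trans hζζ' (le_trans hρr.le (hrpow N))))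
        constructor
        · show v (Q.2 - f.eval Q.1 - ζ') = _
          have he : Q.2 - f.eval Q.1 - ζ' = (-f.eval Q.1) + (Q.2 - ζ') := by ring
          have hfe' : v (-f.eval Q.1) = r ^ d ^ (N + 1) := by rw [v.map_neg, hfe]
          rw [he, na_add_eq v hna (by rw [hfe']; exact lt_of_le_of_lt hmid (hrlt N)), hfe']
        · show v (Q.1 - ζ) ≤ _
          have he : Q.1 - ζ = (Q.1 - ζ') + (ζ' - ζ) := by ring
          rw [he]
          refine le_trans (hna _ _) (max_le ?_ ?_)
          · rw [h1]; exact (hrlt N).le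
          · exact le_trans hζζ (le_trans hρr.le (hrpow (N + 1)))
    intro N _
    rw [max_eq_left ((claim N).2.trans (claim N).1.ge), (claim N).1]
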